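/- Let B and D be real matrices with columns split into blocks B = (B_m B_c B_r B_u B_w B_l B_g B_j), D = (D_m D_c D_r D_u D_w D_l D_g D_j), satisfying B D^T = 0. Suppose M, R, W, G are positive definite. If vectors x, y satisfy x^T B_m M + y^T D_m = 0, y^T D_c = 0, x^T B_r R + y^T D_r = 0, y^T D_u = 0, x^T B_w + y^T D_w W = 0, x^T B_l = 0, x^T B_g + y^T D_g G = 0, and x^T B_j = 0, then x^T B_m = 0, x^T B_r = 0, y^T D_w = 0, and y^T D_g = 0. -/

import Mathlib

open Matrix

lemma kv_nonneg {n : ℕ} (A : Matrix (Fin n) (Fin n) ℝ)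
    (hA : ∀ u : Fin n → ℝ, u ≠ 0 → 0 < u ⬝ᵥ A.mulVec u) (u : Fin n → ℝ) :
    0 ≤ u ⬝ᵥ A.mulVec u := by
  by_cases h : u = 0
  · simp [h]
  · exact (hA u h).le

/-- Kernel-vanishing step in the proof of Theorem 3.1: with BDᵀ = 0 (blockwise) and
M, R, W, G positive definite, the eight left-kernel relations force
xᵀB_m = 0, xᵀB_r = 0, yᵀD_w = 0 and yᵀD_g = 0. -/
theorem kernel_vanishing_step {p t nm nc nr nu nw nl ng nj : ℕ}
    (Bm : Matrix (Fin p) (Fin nm) ℝ) (Bc : Matrix (Fin p) (Fin nc) ℝ)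
    (Br : Matrix (Fin p) (Fin nr) ℝ) (Bu : Matrix (Fin p) (Fin nu) ℝ)
    (Bw : Matrix (Fin p) (Fin nw) ℝ) (Bl : Matrix (Fin p) (Fin nl) ℝ)
    (Bg : Matrix (Fin p) (Fin ng) ℝ) (Bj : Matrix (Fin p) (Fin nj) ℝ)
    (Dm : Matrix (Fin t) (Fin nm) ℝ) (Dc : Matrix (Fin t) (Fin nc) ℝ)
    (Dr : Matrix (Fin t) (Fin nr) ℝ) (Du : Matrix (Fin t) (Fin nu) ℝ)
    (Dw : Matrix (Fin t) (Fin nw) ℝ) (Dl : Matrix (Fin t) (Fin nl) ℝ)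
    (Dg : Matrix (Fin t) (Fin ng) ℝ) (Dj : Matrix (Fin t) (Fin nj) ℝ)
    (M : Matrix (Fin nm) (Fin nm) ℝ) (R : Matrix (Fin nr) (Fin nr) ℝ)
    (W : Matrix (Fin nw) (Fin nw) ℝ) (G : Matrix (Fin ng) (Fin ng) ℝ)
    (hBD : Bm * Dmᵀ + Bc * Dcᵀ + Br * Drᵀ + Bu * Duᵀ
         + Bw * Dwᵀ + Bl * Dlᵀ + Bg * Dgᵀ + Bj * Djᵀ = 0)
    (hM : ∀ u : Fin nm → ℝ, u ≠ 0 → 0 < u ⬝ᵥ M.mulVec u)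
    (hR : ∀ u : Fin nr → ℝ, u ≠ 0 → 0 < u ⬝ᵥ R.mulVec u)
    (hW : ∀ u : Fin nw → ℝ, u ≠ 0 → 0 < u ⬝ᵥ W.mulVec u)
    (hG : ∀ u : Fin ng → ℝ, u ≠ 0 → 0 < u ⬝ᵥ G.mulVec u)
    (x : Fin p → ℝ) (y : Fin t → ℝ)
    (h1 : Bm.vecMul x ᵥ* M + Dm.vecMul y = 0)
    (h2 : Dc.vecMul y = 0)
    (h3 : Br.vecMul x ᵥ* R + Dr.vecMul y = 0)
    (h4 : Du.vecMul y = 0)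
    (h5 : Bw.vecMul x + Dw.vecMul y ᵥ* W = 0)
    (h6 : Bl.vecMul x = 0)
    (h7 : Bg.vecMul x + Dg.vecMul y ᵥ* G = 0)
    (h8 : Bj.vecMul x = 0) :
    Bm.vecMul x = 0 ∧ Br.vecMul x = 0 ∧ Dw.vecMul y = 0 ∧ Dg.vecMul y = 0 := by
  set a := Bm.vecMul x with ha
  set b := Br.vecMul x with hb
  set c := Dw.vecMul y with hc
  set d := Dg.vecMul y with hd
  have key : x ⬝ᵥ (Bm * Dmᵀ + Bc * Dcᵀ + Br * Drᵀ + Bu * Duᵀ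
      + Bw * Dwᵀ + Bl * Dlᵀ + Bg * Dgᵀ + Bj * Djᵀ).mulVec y = 0 := by
    rw [hBD]; simp
  have expand : ∀ {n : ℕ} (B : Matrix (Fin p) (Fin n) ℝ) (D : Matrix (Fin t) (Fin n) ℝ),
      x ⬝ᵥ (B * Dᵀ).mulVec y = B.vecMul x ⬝ᵥ D.vecMul y := by
    intro n B D
    rw [← Matrix.mulVec_mulVec, Matrix.dotProduct_mulVec, Matrix.mulVec_transpose]
  simp only [Matrix.add_mulVec, dotProduct_add, expand] at key
  have em : Dm.vecMul y = -(a ᵥ* M) := eq_neg_of_add_eq_zero_right h1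
  have er : Dr.vecMul y = -(b ᵥ* R) := eq_neg_of_add_eq_zero_right h3
  have ew : Bw.vecMul x = -(c ᵥ* W) := eq_neg_of_add_eq_zero_left h5
  have eg : Bg.vecMul x = -(d ᵥ* G) := eq_neg_of_add_eq_zero_left h7
  have quad : ∀ {n : ℕ} (A : Matrix (Fin n) (Fin n) ℝ) (u : Fin n → ℝ),
      (u ᵥ* A) ⬝ᵥ u = u ⬝ᵥ A.mulVec u := by
    intro n A u
    rw [← Matrix.dotProduct_mulVec]
  rw [h2, h4, h6, h8, em, er, ew, eg] at key
  simp only [dotProduct_neg, neg_dotProduct, dotProduct_zero,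
    zero_dotProduct, dotProduct_comm _ (a ᵥ* M),
    dotProduct_comm _ (b ᵥ* R), ← ha, ← hb, ← hc, ← hd, quad, add_zero, zero_add] at key
  -- key : -(a ⬝ᵥ M *ᵥ a) + -(b ⬝ᵥ R *ᵥ b) + -(c ⬝ᵥ W *ᵥ c) + -(d ⬝ᵥ G *ᵥ d) = 0
  have hsum : a ⬝ᵥ M.mulVec a + b ⬝ᵥ R.mulVec b + c ⬝ᵥ W.mulVec c + d ⬝ᵥ G.mulVec d = 0 := by
    linarith [key]
  have nM := kv_nonneg M hM a
  have nR := kv_nonneg R hR b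
  have nW := kv_nonneg W hW c
  have nG := kv_nonneg G hG d
  refine ⟨?_, ?_, ?_, ?_⟩
  · by_contra h; exact absurd hsum (by have := hM a h; linarith)
  · by_contra h; exact absurd hsum (by have := hR b h; linarith)
  · by_contra h; exact absurd hsum (by have := hW c h; linarith)
  · by_contra h; exact absurd hsum (by have := hG d h; linarith)
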